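/- arXiv:2404.10648 — 6 statements merged into one kernel-verified Lean document; each statement's English description precedes it below -/
import Mathlib

section
/- Let q ∈ (3/4, 1), W = I_q × [0,∞) where I_q = ((1-√(4q-3))/2, (1+√(4q-3))/2), and define τ(v) = ((q-1+v₁)/v₁, v₂/v₁). Then for every v ∈ W, τ(v)₁ ∈ I_q, i.e., (1-√(4q-3))/2 < (q-1+v₁)/v₁ < (1+√(4q-3))/2. -/
theorem tau_fst_mem_Iq (q : ℝ) (hq1 : 3/4 < q) (hq2 : q < 1)
    (v : ℝ × ℝ)
    (hv1 : v.1 ∈ Set.Ioo ((1 - Real.sqrt (4*q - 3))/2) ((1 + Real.sqrt (4*q - 3))/2))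
    (hv2 : 0 ≤ v.2) :
    (1 - Real.sqrt (4*q - 3))/2 < (q - 1 + v.1)/v.1 ∧
    (q - 1 + v.1)/v.1 < (1 + Real.sqrt (4*q - 3))/2 := by
  obtain ⟨h1, h2⟩ := hv1
  set s := Real.sqrt (4*q - 3) with hs
  have hs2 : s ^ 2 = 4*q - 3 := Real.sq_sqrt (by linarith)
  have hs0 : 0 ≤ s := Real.sqrt_nonneg _
  have hs1 : s < 1 := by nlinarith
  have hx0 : 0 < v.1 := by linarith
  constructor
  · rw [lt_div_iff₀ hx0]
    nlinarith [mul_pos (by linarith : (0:ℝ) < (1+s)/2) (by linarith : (0:ℝ) < v.1 - (1-s)/2)]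
  · rw [div_lt_iff₀ hx0]
    nlinarith [mul_pos (by linarith : (0:ℝ) < (1-s)/2) (by linarith : (0:ℝ) < (1+s)/2 - v.1)]
end

section
/- Let q ∈ (3/4, 1), W = I_q × [0,∞) with I_q = ((1-√(4q-3))/2, (1+√(4q-3))/2), and τ(v) = ((q-1+v₁)/v₁, v₂/v₁). For every v ∈ W: τ(v)₁ > v₁, τ(v)₂ ≥ v₂, and if v₂ > 0 then τ(v)₂ > v₂. -/
theorem tau_increasing (q : ℝ) (hq1 : 3/4 < q) (hq2 : q < 1)
    (v : ℝ × ℝ)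
    (hv1 : v.1 ∈ Set.Ioo ((1 - Real.sqrt (4*q - 3))/2) ((1 + Real.sqrt (4*q - 3))/2))
    (hv2 : 0 ≤ v.2) :
    (q - 1 + v.1)/v.1 > v.1 ∧ v.2/v.1 ≥ v.2 ∧ (0 < v.2 → v.2/v.1 > v.2) := by
  obtain ⟨hlo, hhi⟩ := hv1
  set s := Real.sqrt (4*q - 3) with hs
  have hs0 : 0 ≤ s := Real.sqrt_nonneg _
  have hs2 : s^2 = 4*q - 3 := Real.sq_sqrt (by linarith)
  have hs1 : s < 1 := by nlinarith
  have hx0 : 0 < v.1 := by linarith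
  have hx1 : v.1 < 1 := by linarith
  refine ⟨?_, ?_, ?_⟩
  · rw [gt_iff_lt, lt_div_iff₀ hx0]
    nlinarith [mul_pos (by linarith : (0:ℝ) < v.1 - (1 - s)/2)
      (by linarith : (0:ℝ) < (1 + s)/2 - v.1)]
  · rw [ge_iff_le, le_div_iff₀ hx0]
    nlinarith
  · intro hv2'
    rw [gt_iff_lt, lt_div_iff₀ hx0]
    nlinarith
end

section
/- Let q ∈ (3/4, 1), W = I_q × [0,∞), τ(v) = ((q-1+v₁)/v₁, v₂/v₁), and for w ∈ W let L(w) = {λw + (1-λ)τ(w) : λ ∈ (0,1]}. Then for every w ∈ W and u ∈ L(w), we have τ(u) ∈ L(τ(w)). -/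
noncomputable def tau (q : ℝ) (v : ℝ × ℝ) : ℝ × ℝ := ((q - 1 + v.1)/v.1, v.2/v.1)

noncomputable def L (q : ℝ) (w : ℝ × ℝ) : Set (ℝ × ℝ) :=
  {p | ∃ l ∈ Set.Ioc (0:ℝ) 1, p = l • w + (1 - l) • tau q w}

theorem tau_maps_segment (q : ℝ) (hq1 : 3/4 < q) (hq2 : q < 1)
    (w : ℝ × ℝ)
    (hw1 : w.1 ∈ Set.Ioo ((1 - Real.sqrt (4*q - 3))/2) ((1 + Real.sqrt (4*q - 3))/2))
    (hw2 : 0 ≤ w.2)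
    (u : ℝ × ℝ) (hu : u ∈ L q w) :
    tau q u ∈ L q (tau q w) := by
  obtain ⟨l, ⟨hl0, hl1⟩, hueq⟩ := hu
  set x := w.1 with hx
  -- sqrt (4q-3) < 2q-1
  have hs : Real.sqrt (4*q - 3) < 2*q - 1 := by
    rw [show (2*q - 1) = Real.sqrt ((2*q-1)^2) from (Real.sqrt_sq (by nlinarith)).symm]
    apply Real.sqrt_lt_sqrt (by nlinarith)
    nlinarith
  have hxq : 1 - q < x := by
    have := hw1.1
    nlinarith
  have hxpos : 0 < x := by nlinarith
  have hax : 0 < q - 1 + x := by linarith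
  have hu1 : u.1 = l * x + (1 - l) * ((q - 1 + x)/x) := by
    rw [hueq]; simp [tau, ← hx]
  have hu2 : u.2 = l * w.2 + (1 - l) * (w.2/x) := by
    rw [hueq]; simp [tau, ← hx]
  have hu1pos : 0 < u.1 := by
    rw [hu1]
    have h1 : 0 ≤ (1 - l) * ((q - 1 + x)/x) :=
      mul_nonneg (by linarith) (le_of_lt (div_pos hax hxpos))
    nlinarith
  refine ⟨l * x / u.1, ⟨div_pos (mul_pos hl0 hxpos) hu1pos, ?_⟩, ?_⟩
  · rw [div_le_one hu1pos, hu1]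
    have h1 : 0 ≤ (1 - l) * ((q - 1 + x)/x) :=
      mul_nonneg (by linarith) (le_of_lt (div_pos hax hxpos))
    linarith
  · have hxne : x ≠ 0 := ne_of_gt hxpos
    have haxne : q - 1 + x ≠ 0 := ne_of_gt hax
    have hu1ne : u.1 ≠ 0 := ne_of_gt hu1pos
    have hu1' : u.1 = (l * x * x + (1 - l) * (q - 1 + x)) / x := by
      rw [hu1]; field_simp
    have hXne : l * x * x + (1 - l) * (q - 1 + x) ≠ 0 := by
      intro h
      rw [hu1', h] at hu1pos
      simp at hu1pos
    apply Prod.ext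
    · simp only [tau, Prod.smul_fst, Prod.fst_add, smul_eq_mul, ← hx]
      rw [hu1']
      field_simp
      ring
    · simp only [tau, Prod.smul_snd, Prod.snd_add, smul_eq_mul, ← hx]
      rw [hu1', hu2]
      field_simp
      ring
end

section
/- Let q ∈ (3/4, 1), κ ∈ (0,1)² with κ₁ ∈ I_q and κ₂ > 0, and σ(v) = ((1-q)/(1-v₁), v₂(1-q)/(1-v₁)). Then the sequence (σᵏ(κ)₁)ₖ is strictly decreasing and converges to (1-√(4q-3))/2. -/
noncomputable def sig (q : ℝ) (v : ℝ × ℝ) : ℝ × ℝ :=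
  ((1 - q)/(1 - v.1), v.2 * (1 - q)/(1 - v.1))

theorem sigma_iter_fst_tendsto (q : ℝ) (hq1 : 3/4 < q) (hq2 : q < 1)
    (k : ℝ × ℝ) (hk : k ∈ Set.Ioo (0:ℝ) 1 ×ˢ Set.Ioo (0:ℝ) 1)
    (hk1 : k.1 ∈ Set.Ioo ((1 - Real.sqrt (4*q - 3))/2) ((1 + Real.sqrt (4*q - 3))/2))
    (hk2 : 0 < k.2) :
    StrictAnti (fun n : ℕ => ((sig q)^[n] k).1) ∧
    Filter.Tendsto (fun n : ℕ => ((sig q)^[n] k).1) Filter.atTop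
      (nhds ((1 - Real.sqrt (4*q - 3))/2)) := by
  obtain ⟨hk1a, hk1b⟩ := hk1
  set s := Real.sqrt (4*q - 3) with hs
  have hs0 : 0 < s := Real.sqrt_pos.mpr (by linarith)
  have hs1 : s < 1 := by
    rw [hs, show (1:ℝ) = Real.sqrt 1 by simp]
    exact Real.sqrt_lt_sqrt (by linarith) (by linarith)
  have hssq : s^2 = 4*q - 3 := Real.sq_sqrt (by linarith)
  set L := (1 - s)/2 with hLdef
  set U := (1 + s)/2 with hUdef
  have hLU : L*U = 1 - q := by rw [hLdef, hUdef]; nlinarith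
  have hLplusU : L + U = 1 := by rw [hLdef, hUdef]; ring
  have hL0 : 0 < L := by rw [hLdef]; linarith
  have hU1 : U < 1 := by rw [hUdef]; linarith
  set f : ℝ → ℝ := fun x => (1 - q)/(1 - x) with hf
  have hiter : ∀ n, ((sig q)^[n] k).1 = f^[n] k.1 := by
    intro n
    induction n with
    | zero => simp
    | succ n ih =>
      rw [Function.iterate_succ_apply', Function.iterate_succ_apply', ← ih]
      rfl
  have key : ∀ x ∈ Set.Ioo L U, f x ∈ Set.Ioo L U ∧ f x < x := by
    rintro x ⟨hx1, hx2⟩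
    have h1x : 0 < 1 - x := by linarith
    refine ⟨⟨?_, ?_⟩, ?_⟩
    · rw [hf]
      rw [lt_div_iff₀ h1x]
      nlinarith [mul_pos hL0 (sub_pos.mpr hx1)]
    · rw [hf]
      rw [div_lt_iff₀ h1x]
      nlinarith
    · show (1 - q)/(1 - x) < x
      rw [div_lt_iff₀ h1x]
      nlinarith [mul_pos (sub_pos.mpr hx1) (sub_pos.mpr hx2)]
  have hmem : ∀ n, f^[n] k.1 ∈ Set.Ioo L U := by
    intro n
    induction n with
    | zero => exact ⟨hk1a, hk1b⟩
    | succ n ih =>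
      rw [Function.iterate_succ_apply']
      exact (key _ ih).1
  have hanti : StrictAnti (fun n : ℕ => ((sig q)^[n] k).1) := by
    apply strictAnti_nat_of_succ_lt
    intro n
    show ((sig q)^[n+1] k).1 < ((sig q)^[n] k).1
    rw [hiter, hiter, Function.iterate_succ_apply']
    exact (key _ (hmem n)).2
  refine ⟨hanti, ?_⟩
  have hbdd : BddBelow (Set.range fun n : ℕ => f^[n] k.1) := by
    refine ⟨L, ?_⟩
    rintro y ⟨n, rfl⟩
    exact (hmem n).1.le
  have hantif : Antitone (fun n : ℕ => f^[n] k.1) := by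
    have := hanti.antitone
    simpa only [hiter] using this
  have htend : Filter.Tendsto (fun n : ℕ => f^[n] k.1) Filter.atTop
      (nhds (⨅ n : ℕ, f^[n] k.1)) := tendsto_atTop_ciInf hantif hbdd
  set c := ⨅ n : ℕ, f^[n] k.1 with hc
  have hcL : L ≤ c := le_ciInf fun n => (hmem n).1.le
  have hcU : c < U := by
    have h0 : c ≤ f^[0] k.1 := ciInf_le hbdd 0
    simp only [Function.iterate_zero_apply] at h0
    linarith [hk1b]
  have hc1 : 1 - c ≠ 0 := by
    have : c < 1 := lt_of_lt_of_le hcU hU1.le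
    linarith
  have hcont : ContinuousAt f c := by
    apply ContinuousAt.div continuousAt_const (by fun_prop) hc1
  have htend2 : Filter.Tendsto (fun n : ℕ => f^[n+1] k.1) Filter.atTop (nhds c) :=
    htend.comp (Filter.tendsto_add_atTop_nat 1)
  have htend3 : Filter.Tendsto (fun n : ℕ => f^[n+1] k.1) Filter.atTop (nhds (f c)) := by
    have := hcont.tendsto.comp htend
    simpa [Function.comp_def, Function.iterate_succ_apply'] using this
  have hfix : f c = c := tendsto_nhds_unique htend3 htend2
  have hceq : c = L := by
    have h1c : (1 : ℝ) - c ≠ 0 := hc1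
    have : (1 - q) = c * (1 - c) := (div_eq_iff h1c).mp hfix
    have hquad : (c - L) * (c - U) = 0 := by nlinarith
    rcases mul_eq_zero.mp hquad with h | h
    · linarith
    · exfalso; linarith
  have : Filter.Tendsto (fun n : ℕ => f^[n] k.1) Filter.atTop (nhds L) := hceq ▸ htend
  simpa only [hiter] using this
end

section
/- Let q ∈ (3/4, 1), κ ∈ W = I_q × [0,∞) with κ₂ > 0, and let u ∈ Points(κ). If u is a (countable) positive convex combination of vectors u¹, u², ... all lying in Area(κ), then uⁱ = u for all i. -/
noncomputable def W (q : ℝ) : Set (ℝ × ℝ) :=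
  (Set.Ioo ((1 - Real.sqrt (4*q - 3))/2) ((1 + Real.sqrt (4*q - 3))/2)) ×ˢ Set.Ici (0:ℝ)

noncomputable def Points (q : ℝ) (k : ℝ × ℝ) : Set (ℝ × ℝ) :=
  {p | ∃ n : ℕ, p = (tau q)^[n] k ∨ p = (sig q)^[n] k}

noncomputable def H (q : ℝ) (u : ℝ × ℝ) : Set (ℝ × ℝ) :=
  {w | ((tau q u).2 - u.2) * (w.1 - u.1) + (u.1 - (tau q u).1) * (w.2 - u.2) ≤ 0}

noncomputable def Area (q : ℝ) (k : ℝ × ℝ) : Set (ℝ × ℝ) :=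
  W q ∩ ⋂ u ∈ Points q k, H q u

/-- Basic consequences of membership in `W q`. -/
lemma W_props {q : ℝ} (hq1 : 3/4 < q) (hq2 : q < 1) {v : ℝ × ℝ} (hv : v ∈ W q) :
    0 < v.1 ∧ v.1 < 1 ∧ v.1 * v.1 - v.1 + (1 - q) < 0 ∧ 0 ≤ v.2 := by
  obtain ⟨⟨h1, h2⟩, h3⟩ := hv
  set r := Real.sqrt (4*q - 3) with hr
  have hrpos : 0 ≤ r := Real.sqrt_nonneg _
  have hr2 : r^2 = 4*q - 3 := Real.sq_sqrt (by linarith)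
  have hr1 : r < 1 := by
    nlinarith [hr2, hrpos]
  refine ⟨by nlinarith, by nlinarith, by nlinarith, h3⟩

lemma W_mem_iff {q : ℝ} (hq1 : 3/4 < q) (hq2 : q < 1) {v : ℝ × ℝ}
    (h1 : v.1 * v.1 - v.1 + (1 - q) < 0) (h2 : 0 ≤ v.2) : v ∈ W q := by
  set r := Real.sqrt (4*q - 3) with hr
  have hrpos : 0 ≤ r := Real.sqrt_nonneg _
  have hr2 : r^2 = 4*q - 3 := Real.sq_sqrt (by linarith)
  constructor
  · constructor
    · nlinarith [sq_nonneg (2*v.1 - 1 + r)]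
    · nlinarith [sq_nonneg (2*v.1 - 1 - r)]
  · exact h2

lemma tau_mem {q : ℝ} (hq1 : 3/4 < q) (hq2 : q < 1) {v : ℝ × ℝ}
    (hv : v ∈ W q) (h2 : 0 < v.2) : tau q v ∈ W q ∧ 0 < (tau q v).2 := by
  obtain ⟨hx0, hx1, hA, _⟩ := W_props hq1 hq2 hv
  have hx0' : v.1 ≠ 0 := ne_of_gt hx0
  constructor
  · apply W_mem_iff hq1 hq2
    · show (q - 1 + v.1)/v.1 * ((q - 1 + v.1)/v.1) - (q - 1 + v.1)/v.1 + (1 - q) < 0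
      rw [div_mul_div_comm]
      rw [div_sub_div _ _ (by positivity) hx0', div_add' _ _ _ (by positivity)]
      apply div_neg_of_neg_of_pos _ (by positivity)
      have hApos : 0 < q - 1 + v.1 - v.1 * v.1 := by linarith
      nlinarith [mul_pos (mul_pos hx0 hApos) (show (0:ℝ) < 1 - q by linarith)]
    · show 0 ≤ v.2 / v.1
      positivity
  · show 0 < v.2 / v.1
    positivity

lemma sig_mem {q : ℝ} (hq1 : 3/4 < q) (hq2 : q < 1) {v : ℝ × ℝ}
    (hv : v ∈ W q) (h2 : 0 < v.2) : sig q v ∈ W q ∧ 0 < (sig q v).2 := by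
  obtain ⟨hx0, hx1, hA, _⟩ := W_props hq1 hq2 hv
  have hx1' : (0:ℝ) < 1 - v.1 := by linarith
  constructor
  · apply W_mem_iff hq1 hq2
    · show (1 - q)/(1 - v.1) * ((1 - q)/(1 - v.1)) - (1 - q)/(1 - v.1) + (1 - q) < 0
      rw [div_mul_div_comm]
      rw [div_sub_div _ _ (by positivity) (ne_of_gt hx1'), div_add' _ _ _ (by positivity)]
      apply div_neg_of_neg_of_pos _ (by positivity)
      have hApos : 0 < q - 1 + v.1 - v.1 * v.1 := by linarith
      nlinarith [mul_pos (mul_pos hx1' hApos) (show (0:ℝ) < 1 - q by linarith)]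
    · show 0 ≤ v.2 * (1 - q) / (1 - v.1)
      have : (0:ℝ) < 1 - q := by linarith
      positivity
  · show 0 < v.2 * (1 - q) / (1 - v.1)
    have : (0:ℝ) < 1 - q := by linarith
    positivity

lemma points_mem {q : ℝ} (hq1 : 3/4 < q) (hq2 : q < 1) {k : ℝ × ℝ}
    (hk : k ∈ W q) (hk2 : 0 < k.2) {u : ℝ × ℝ} (hu : u ∈ Points q k) :
    u ∈ W q ∧ 0 < u.2 := by
  have htau : ∀ n : ℕ, (tau q)^[n] k ∈ W q ∧ 0 < ((tau q)^[n] k).2 := by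
    intro n
    induction n with
    | zero => exact ⟨hk, hk2⟩
    | succ m ih =>
      rw [Function.iterate_succ_apply']
      exact tau_mem hq1 hq2 ih.1 ih.2
  have hsig : ∀ n : ℕ, (sig q)^[n] k ∈ W q ∧ 0 < ((sig q)^[n] k).2 := by
    intro n
    induction n with
    | zero => exact ⟨hk, hk2⟩
    | succ m ih =>
      rw [Function.iterate_succ_apply']
      exact sig_mem hq1 hq2 ih.1 ih.2
  obtain ⟨n, h | h⟩ := hu
  · rw [h]; exact htau n
  · rw [h]; exact hsig n

lemma sig_tau {q : ℝ} (hq2 : q < 1) {v : ℝ × ℝ} (hv : v.1 ≠ 0) : sig q (tau q v) = v := by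
  have h1 : 1 - (q - 1 + v.1)/v.1 = (1 - q)/v.1 := by
    field_simp
    ring
  have hq : (1 - q) ≠ 0 := by linarith
  have hq' : (1 - q)/v.1 ≠ 0 := div_ne_zero hq hv
  simp only [sig, tau, h1]
  rw [Prod.ext_iff]
  constructor <;> · field_simp; try ring

lemma tau_sig {q : ℝ} (hq2 : q < 1) {v : ℝ × ℝ} (hv : v.1 ≠ 1) : tau q (sig q v) = v := by
  have hv1 : 1 - v.1 ≠ 0 := by intro h; apply hv; linarith
  have hq : (1 - q) ≠ 0 := by linarith
  simp only [tau, sig]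
  rw [Prod.ext_iff]
  constructor <;> · field_simp; try ring

/-- the predecessor of a point of `Points` is in `Points`, and `tau` of it is the point. -/
lemma sig_points {q : ℝ} (hq1 : 3/4 < q) (hq2 : q < 1) {k : ℝ × ℝ}
    (hk : k ∈ W q) (hk2 : 0 < k.2) {u : ℝ × ℝ} (hu : u ∈ Points q k) :
    sig q u ∈ Points q k ∧ tau q (sig q u) = u := by
  obtain ⟨huW, _⟩ := points_mem hq1 hq2 hk hk2 hu
  have hu1 : u.1 ≠ 1 := ne_of_lt (W_props hq1 hq2 huW).2.1
  refine ⟨?_, tau_sig hq2 hu1⟩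
  obtain ⟨n, h | h⟩ := hu
  · match n with
    | 0 => exact ⟨1, Or.inr (by simp [h])⟩
    | Nat.succ m =>
      refine ⟨m, Or.inl ?_⟩
      have hw : ((tau q)^[m] k) ∈ W q := (points_mem hq1 hq2 hk hk2 ⟨m, Or.inl rfl⟩).1
      have hw1 : ((tau q)^[m] k).1 ≠ 0 := ne_of_gt (W_props hq1 hq2 hw).1
      rw [h, Function.iterate_succ_apply', sig_tau hq2 hw1]
  · exact ⟨n + 1, Or.inr (by rw [h, Function.iterate_succ_apply'])⟩

lemma hasSum_nonpos_zero {f : ℕ → ℝ} (h : HasSum f 0) (hn : ∀ j, f j ≤ 0) (i : ℕ) :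
    f i = 0 := by
  have h1 : -f i ≤ 0 := by
    have := le_hasSum h.neg i (fun j _ => by simpa using hn j)
    simpa using this
  linarith [hn i]

theorem extreme_point_of_area (q : ℝ) (hq1 : 3/4 < q) (hq2 : q < 1)
    (k : ℝ × ℝ) (hk : k ∈ W q) (hk2 : 0 < k.2)
    (u : ℝ × ℝ) (hu : u ∈ Points q k)
    (l : ℕ → ℝ) (ui : ℕ → ℝ × ℝ)
    (hl : ∀ i, 0 < l i)
    (hui : ∀ i, ui i ∈ Area q k)
    (hlsum : HasSum l 1)
    (hcomb : HasSum (fun i => l i • ui i) u) :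
    ∀ i, ui i = u := by
  obtain ⟨huW, hu2⟩ := points_mem hq1 hq2 hk hk2 hu
  obtain ⟨hx0, hx1, hA, _⟩ := W_props hq1 hq2 huW
  obtain ⟨hpP, hpt⟩ := sig_points hq1 hq2 hk hk2 hu
  set p := sig q u with hp
  -- the two supporting functionals
  set a₁ : ℝ := (tau q u).2 - u.2 with ha₁
  set b₁ : ℝ := u.1 - (tau q u).1 with hb₁
  set a₂ : ℝ := u.2 - p.2 with ha₂
  set b₂ : ℝ := p.1 - u.1 with hb₂
  -- pointwise inequalities
  have key1 : ∀ i, a₁ * ((ui i).1 - u.1) + b₁ * ((ui i).2 - u.2) ≤ 0 := by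
    intro i
    have := (hui i).2
    rw [Set.mem_iInter₂] at this
    exact this u hu
  have key2 : ∀ i, a₂ * ((ui i).1 - u.1) + b₂ * ((ui i).2 - u.2) ≤ 0 := by
    intro i
    have h := (hui i).2
    rw [Set.mem_iInter₂] at h
    have h2 := h p hpP
    simp only [H, Set.mem_setOf_eq, hpt] at h2
    have heq : a₂ * ((ui i).1 - u.1) + b₂ * ((ui i).2 - u.2) =
        (u.2 - p.2) * ((ui i).1 - p.1) + (p.1 - u.1) * ((ui i).2 - p.2) := by
      rw [ha₂, hb₂]; ring
    rw [heq]; exact h2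
  -- component sums
  have hs1 : HasSum (fun i => l i * (ui i).1) u.1 := by
    have := hcomb.map (ContinuousLinearMap.fst ℝ ℝ ℝ) (ContinuousLinearMap.fst ℝ ℝ ℝ).continuous
    simpa [Function.comp_def] using this
  have hs2 : HasSum (fun i => l i * (ui i).2) u.2 := by
    have := hcomb.map (ContinuousLinearMap.snd ℝ ℝ ℝ) (ContinuousLinearMap.snd ℝ ℝ ℝ).continuous
    simpa [Function.comp_def] using this
  -- both functionals vanish at every ui i
  have vanish : ∀ (a b : ℝ), (∀ i, a * ((ui i).1 - u.1) + b * ((ui i).2 - u.2) ≤ 0) →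
      ∀ i, a * ((ui i).1 - u.1) + b * ((ui i).2 - u.2) = 0 := by
    intro a b hab i
    have hsum : HasSum (fun i => l i * (a * ((ui i).1 - u.1) + b * ((ui i).2 - u.2))) 0 := by
      have h := ((hs1.mul_left a).add (hs2.mul_left b)).sub (hlsum.mul_left (a * u.1 + b * u.2))
      have heq : (fun i => (a * (l i * (ui i).1) + b * (l i * (ui i).2)) -
          (a * u.1 + b * u.2) * l i) =
          fun i => l i * (a * ((ui i).1 - u.1) + b * ((ui i).2 - u.2)) := by
        funext i; ring
      rw [heq] at h
      rw [show a * u.1 + b * u.2 - (a * u.1 + b * u.2) * 1 = 0 by ring] at h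
      exact h
    have := hasSum_nonpos_zero hsum
      (fun j => mul_nonpos_of_nonneg_of_nonpos (le_of_lt (hl j)) (hab j)) i
    have hli := hl i
    rcases mul_eq_zero.mp this with h | h
    · exact absurd h (ne_of_gt hli)
    · exact h
  have v1 := vanish a₁ b₁ key1
  have v2 := vanish a₂ b₂ key2
  -- nonvanishing determinant
  have hdet : a₁ * b₂ - a₂ * b₁ ≠ 0 := by
    have hx0' : u.1 ≠ 0 := ne_of_gt hx0
    have hx1' : (1:ℝ) - u.1 ≠ 0 := by intro h; linarith
    have hkey : (a₁ * b₂ - a₂ * b₁) * (u.1 * (1 - u.1)) =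
        u.2 * (q - 1) * (q - 1 + u.1 - u.1 * u.1) := by
      simp only [ha₁, hb₁, ha₂, hb₂, hp, tau, sig]
      field_simp
      ring
    intro h
    rw [h, zero_mul] at hkey
    have hApos : 0 < q - 1 + u.1 - u.1 * u.1 := by nlinarith
    have : u.2 * (q - 1) * (q - 1 + u.1 - u.1 * u.1) < 0 := by
      apply mul_neg_of_neg_of_pos _ hApos
      apply mul_neg_of_pos_of_neg hu2
      linarith
    linarith [hkey ▸ this]
  -- conclude
  intro i
  have e1 := v1 i
  have e2 := v2 i
  have hX : (a₁ * b₂ - a₂ * b₁) * ((ui i).1 - u.1) = 0 := by linear_combination b₂ * e1 - b₁ * e2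
  have hY : (a₁ * b₂ - a₂ * b₁) * ((ui i).2 - u.2) = 0 := by linear_combination a₁ * e2 - a₂ * e1
  have hX0 : (ui i).1 = u.1 := by
    rcases mul_eq_zero.mp hX with h | h
    · exact absurd h hdet
    · linarith
  have hY0 : (ui i).2 = u.2 := by
    rcases mul_eq_zero.mp hY with h | h
    · exact absurd h hdet
    · linarith
  exact Prod.ext hX0 hY0
end

section
/- Let q ∈ (3/4, 1), κ ∈ (0,1)² with κ₁ ∈ I_q, κ₂ > 0, and κ₁ + κ₂ < q - 1/2, and let γ satisfy (1-q)κ₂ < γ. Let σ(v) = ((1-q)/(1-v₁), v₂(1-q)/(1-v₁)). For every n ≥ 1, define pₙ = (γ - (1-q)σⁿ⁻¹(κ)₂)/(1 - σⁿ(κ)₁ - σⁿ(κ)₂). Then pₙ > 0 and 1 - σⁿ(κ)₁ - σⁿ(κ)₂ > 0, so pₙ is well-defined and positive. -/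
set_option maxHeartbeats 1000000


theorem p_n_pos (q : ℝ) (hq1 : 3/4 < q) (hq2 : q < 1)
    (k : ℝ × ℝ) (hk : k ∈ Set.Ioo (0:ℝ) 1 ×ˢ Set.Ioo (0:ℝ) 1)
    (hk1 : k.1 ∈ Set.Ioo ((1 - Real.sqrt (4*q - 3))/2) ((1 + Real.sqrt (4*q - 3))/2))
    (hk2 : 0 < k.2)
    (hksum : k.1 + k.2 < q - 1/2)
    (g : ℝ) (hg : (1 - q) * k.2 < g)
    (n : ℕ) (hn : 1 ≤ n) :
    0 < 1 - ((sig q)^[n] k).1 - ((sig q)^[n] k).2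
    ∧ 0 < (g - (1 - q) * ((sig q)^[n-1] k).2)
          / (1 - ((sig q)^[n] k).1 - ((sig q)^[n] k).2) := by
  set s := Real.sqrt (4*q - 3) with hs_def
  have hs_nonneg : 0 ≤ s := Real.sqrt_nonneg _
  have hs2 : s^2 = 4*q - 3 := Real.sq_sqrt (by linarith)
  have hs_lt1 : s < 1 := by nlinarith
  set lo := (1 - s)/2 with hlo_def
  set hi := (1 + s)/2 with hhi_def
  have hsum1 : lo + hi = 1 := by simp [hlo_def, hhi_def]; ring
  have hprod : lo * hi = 1 - q := by
    simp only [hlo_def, hhi_def]; nlinarith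
  have hlo_pos : 0 < lo := by simp [hlo_def]; linarith
  have hhi_lt1 : hi < 1 := by simp [hhi_def]; linarith
  have hq1' : 0 < 1 - q := by linarith
  -- invariant
  have key : ∀ m : ℕ, lo < ((sig q)^[m] k).1 ∧ ((sig q)^[m] k).1 < hi ∧
      0 < ((sig q)^[m] k).2 ∧ ((sig q)^[m] k).2 ≤ k.2 ∧
      ((sig q)^[m] k).1 + ((sig q)^[m] k).2 < q - 1/2 := by
    intro m
    induction m with
    | zero =>
      simp only [Function.iterate_zero, id]
      exact ⟨hk1.1, hk1.2, hk2, le_refl _, hksum⟩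
    | succ m ih =>
      obtain ⟨h1, h2, h3, h4, h5⟩ := ih
      set w := (sig q)^[m] k with hw
      have hd : 0 < 1 - w.1 := by linarith
      rw [Function.iterate_succ_apply']
      have ha'lo : lo < (1 - q)/(1 - w.1) := by
        rw [lt_div_iff₀ hd]
        nlinarith
      have ha'hi : (1 - q)/(1 - w.1) < hi := by
        rw [div_lt_iff₀ hd]
        nlinarith
      have ha'w : (1 - q)/(1 - w.1) < w.1 := by
        rw [div_lt_iff₀ hd]
        nlinarith [mul_pos (sub_pos.mpr h1) (sub_pos.mpr h2)]
      have hb'eq : (sig q w).2 = w.2 * ((1 - q)/(1 - w.1)) := by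
        simp [sig]; ring
      have hb'pos : 0 < (sig q w).2 := by
        rw [hb'eq]; exact mul_pos h3 (lt_trans hlo_pos ha'lo)
      have hb'lt : (sig q w).2 < w.2 := by
        rw [hb'eq]
        nlinarith [lt_trans ha'hi hhi_lt1]
      refine ⟨ha'lo, ha'hi, hb'pos, le_of_lt (lt_of_lt_of_le hb'lt h4), ?_⟩
      have : (sig q w).1 = (1 - q)/(1 - w.1) := rfl
      rw [this]
      linarith
  obtain ⟨_, _, _, _, h5⟩ := key n
  obtain ⟨_, _, _, h4', _⟩ := key (n-1)
  have hden : 0 < 1 - ((sig q)^[n] k).1 - ((sig q)^[n] k).2 := by linarith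
  refine ⟨hden, div_pos ?_ hden⟩
  have := mul_le_mul_of_nonneg_left h4' (le_of_lt hq1')
  linarith
end
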